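/- Let A, B ∈ M_n be positive semidefinite with B ≤ A, and let f : [0,∞) → [0,∞) be a concave function. Then for every unitarily invariant norm ‖·‖, one has ‖f(B)‖ ≤ ‖f(A)‖, where f is applied via functional calculus. -/

import Mathlib

open Matrix Set ComplexOrder

variable {m : Type*}

/-- Square root of a positive semidefinite matrix (as in the older Mathlib). -/
noncomputable def Matrix.PosSemidef.sqrt {n 𝕜 : Type*} [Fintype n] [DecidableEq n] [RCLike 𝕜]
    {A : Matrix n n 𝕜} (hA : A.PosSemidef) : Matrix n n 𝕜 :=
  hA.1.eigenvectorUnitary.1 * diagonal ((↑) ∘ (√·) ∘ hA.1.eigenvalues) *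
    (star hA.1.eigenvectorUnitary : Matrix n n 𝕜)

theorem Matrix.PosSemidef.posSemidef_sqrt {n 𝕜 : Type*} [Fintype n] [DecidableEq n] [RCLike 𝕜]
    {A : Matrix n n 𝕜} (hA : A.PosSemidef) : hA.sqrt.PosSemidef := by
  have hd : (diagonal ((↑) ∘ (√·) ∘ hA.1.eigenvalues) : Matrix n n 𝕜).PosSemidef :=
    PosSemidef.diagonal (fun i => by simp [Function.comp])
  simpa [Matrix.PosSemidef.sqrt, ← Matrix.star_eq_conjTranspose] using
    hd.mul_mul_conjTranspose_same (hA.1.eigenvectorUnitary : Matrix n n 𝕜)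

/-- The modulus `|X| = (XᴴX)^{1/2}` of a matrix. -/
noncomputable def matAbs [Fintype m] [DecidableEq m] (X : Matrix m m ℂ) : Matrix m m ℂ :=
  Matrix.PosSemidef.sqrt (Matrix.posSemidef_conjTranspose_mul_self X)

theorem matAbs_posSemidef [Fintype m] [DecidableEq m] (X : Matrix m m ℂ) :
    (matAbs X).PosSemidef :=
  Matrix.PosSemidef.posSemidef_sqrt (Matrix.posSemidef_conjTranspose_mul_self X)

/-- Functional calculus: apply `f : ℝ → ℝ` to a Hermitian matrix via its spectral
decomposition (junk value `0` for non-Hermitian input). -/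
noncomputable def matFun [Fintype m] [DecidableEq m] (f : ℝ → ℝ) (X : Matrix m m ℂ) :
    Matrix m m ℂ :=
  if h : X.IsHermitian then
    (h.eigenvectorUnitary : Matrix m m ℂ) *
      Matrix.diagonal (fun i => (f (h.eigenvalues i) : ℂ)) *
      star (h.eigenvectorUnitary : Matrix m m ℂ)
  else 0

/-- Real part `Re A = (A + Aᴴ)/2`. -/
noncomputable def reM (A : Matrix m m ℂ) : Matrix m m ℂ := (1/2 : ℂ) • (A + Aᴴ)

/-- Imaginary part `Im A = (A - Aᴴ)/(2i)`. -/
noncomputable def imM (A : Matrix m m ℂ) : Matrix m m ℂ := (1/(2*Complex.I)) • (A - Aᴴ)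

/-- Numerical range `W(A) = {x* A x : x*x = 1}`. -/
def numRange [Fintype m] (A : Matrix m m ℂ) : Set ℂ :=
  {z | ∃ x : m → ℂ, star x ⬝ᵥ x = 1 ∧ z = star x ⬝ᵥ A.mulVec x}

/-- The sector `S_α = {z : Re z ≥ 0, |Im z| ≤ (Re z) tan α}`. -/
def sector (α : ℝ) : Set ℂ := {z | 0 ≤ z.re ∧ |z.im| ≤ z.re * Real.tan α}

/-! ### Auxiliary lemmas -/

section Aux

variable {n : ℕ}

/-- A nonnegative concave function on `[0, ∞)` is nondecreasing. -/
lemma concave_nonneg_mono (f : ℝ → ℝ) (hf : ConcaveOn ℝ (Set.Ici 0) f)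
    (hf0 : ∀ x : ℝ, 0 ≤ x → 0 ≤ f x) {a b : ℝ} (ha : 0 ≤ a) (hab : a ≤ b) : f a ≤ f b := by
  rcases eq_or_lt_of_le hab with rfl | hlt
  · exact le_refl _
  by_contra hcon
  push_neg at hcon
  set d : ℝ := f a - f b with hd
  have hd0 : 0 < d := by rw [hd]; linarith
  have hfa0 : 0 ≤ f a := hf0 a ha
  have hfb0 : 0 ≤ f b := hf0 b (ha.trans hab)
  set z : ℝ := a + (b - a) * (f a + 1) / d with hz
  have hzb : b ≤ z := by
    have h1 : (1:ℝ) ≤ (f a + 1)/d := by rw [le_div_iff₀ hd0]; linarith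
    have h2 := mul_le_mul_of_nonneg_left h1 (sub_pos.2 hlt).le
    rw [hz, mul_div_assoc]
    linarith
  have hza : a < z := lt_of_lt_of_le hlt hzb
  have hza' : 0 < z - a := by linarith
  set s : ℝ := (z - b) / (z - a) with hs
  set t : ℝ := (b - a) / (z - a) with ht
  have hs0 : 0 ≤ s := div_nonneg (by linarith) hza'.le
  have ht0 : 0 ≤ t := div_nonneg (by linarith) hza'.le
  have hst : s + t = 1 := by rw [hs, ht]; field_simp; ring
  have hcomb : s • a + t • z = b := by
    simp only [smul_eq_mul, hs, ht]
    field_simp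
    ring
  have hkey := hf.2 (mem_Ici.2 ha) (mem_Ici.2 (by linarith : (0:ℝ) ≤ z)) hs0 ht0 hst
  rw [hcomb] at hkey
  simp only [smul_eq_mul] at hkey
  have hfz : 0 ≤ f z := hf0 z (by linarith)
  have hba : b - a ≠ 0 := by linarith
  have hfa1 : (0:ℝ) < f a + 1 := by linarith
  have hzma : z - a = (b - a) * (f a + 1) / d := by rw [hz]; ring
  have hden : (b - a) * (f a + 1) ≠ 0 := mul_ne_zero hba hfa1.ne'
  have ht2 : t * (f a + 1) = d := by
    rw [ht, hzma, div_div_eq_mul_div, div_mul_eq_mul_div, div_eq_iff hden]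
    ring
  have htpos : 0 < t := by nlinarith [ht2, hd0, hfa1, ht0]
  nlinarith [hkey, ht2, mul_nonneg ht0 hfz, hst, hd0, hfa0, htpos]

lemma permMat_star (e : Equiv.Perm (Fin n)) :
    star (e.toPEquiv.toMatrix : Matrix (Fin n) (Fin n) ℂ) = e.symm.toPEquiv.toMatrix := by
  ext i j
  rw [Matrix.star_apply, PEquiv.toMatrix_toPEquiv_eq, Matrix.submatrix_apply, PEquiv.toMatrix_toPEquiv_eq, Matrix.submatrix_apply,
    Matrix.one_apply, Matrix.one_apply, id_eq, id_eq]
  by_cases h : e j = i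
  · rw [if_pos h, if_pos (by rw [Equiv.symm_apply_eq]; exact h.symm), star_one]
  · rw [if_neg h, star_zero, if_neg (by rw [Equiv.symm_apply_eq]; exact fun hh => h hh.symm)]

lemma permMat_unitary (e : Equiv.Perm (Fin n)) :
    (e.toPEquiv.toMatrix : Matrix (Fin n) (Fin n) ℂ) ∈ Matrix.unitaryGroup (Fin n) ℂ := by
  rw [Matrix.mem_unitaryGroup_iff, permMat_star, ← PEquiv.toMatrix_trans, ← Equiv.toPEquiv_trans]
  simp

lemma perm_diag_eq (N : Matrix (Fin n) (Fin n) ℂ → ℝ)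
    (hui : ∀ X, ∀ U ∈ Matrix.unitaryGroup (Fin n) ℂ, ∀ V ∈ Matrix.unitaryGroup (Fin n) ℂ,
      N (U * X * V) = N X) (d : Fin n → ℂ) (e : Equiv.Perm (Fin n)) :
    N (Matrix.diagonal (d ∘ e)) = N (Matrix.diagonal d) := by
  have h1 : (e.toPEquiv.toMatrix : Matrix (Fin n) (Fin n) ℂ) * Matrix.diagonal d *
      e.symm.toPEquiv.toMatrix = Matrix.diagonal (d ∘ e) := by
    rw [PEquiv.toMatrix_toPEquiv_mul, PEquiv.mul_toMatrix_toPEquiv, Matrix.submatrix_submatrix]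
    simp [Matrix.submatrix_diagonal_equiv]
  rw [← h1, hui _ _ (permMat_unitary e) _ (permMat_unitary e.symm)]

lemma diag_step (N : Matrix (Fin n) (Fin n) ℂ → ℝ)
    (hadd : ∀ X Y, N (X + Y) ≤ N X + N Y)
    (hsmul : ∀ (c : ℂ) X, N (c • X) = ‖c‖ * N X)
    (hui : ∀ X, ∀ U ∈ Matrix.unitaryGroup (Fin n) ℂ, ∀ V ∈ Matrix.unitaryGroup (Fin n) ℂ,
      N (U * X * V) = N X)
    (μ : Fin n → ℝ) (j : Fin n) (b : ℝ) (h0 : 0 ≤ μ j) (hb : μ j ≤ b) :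
    N (Matrix.diagonal (fun i => (μ i : ℂ))) ≤
      N (Matrix.diagonal (fun i => ((Function.update μ j b) i : ℂ))) := by
  rcases eq_or_lt_of_le (h0.trans hb) with hb0 | hb0
  · have : Function.update μ j b = μ := by
      funext i
      rcases eq_or_ne i j with rfl | h
      · simp only [Function.update_self, ← hb0]
        exact le_antisymm h0 (hb.trans_eq hb0.symm)
      · simp [Function.update_of_ne h]
    rw [this]
  · set s : ℝ := (b + μ j) / (2 * b) with hs
    have hs0 : 0 ≤ s := by positivity
    have hs1 : s ≤ 1 := by rw [hs, div_le_one (by linarith)]; linarith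
    set Dp := Matrix.diagonal (fun i => ((Function.update μ j b) i : ℂ)) with hDp
    set Dm := Matrix.diagonal (fun i => ((Function.update μ j (-b)) i : ℂ)) with hDm
    have hbne : (b : ℂ) ≠ 0 := by exact_mod_cast hb0.ne'
    have hdecomp : Matrix.diagonal (fun i => (μ i : ℂ)) = (s : ℂ) • Dp + ((1 - s : ℝ) : ℂ) • Dm := by
      ext i i'
      rcases eq_or_ne i i' with rfl | hii
      · simp only [hDp, hDm, Matrix.diagonal_apply_eq, Matrix.add_apply, Matrix.smul_apply,
          smul_eq_mul]
        rcases eq_or_ne i j with rfl | h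
        · simp only [Function.update_self, hs]
          push_cast
          field_simp
          ring
        · simp only [Function.update_of_ne h]
          push_cast
          ring
      · simp [hDp, hDm, Matrix.diagonal_apply_ne _ hii]
    have hE : Dm = Matrix.diagonal (fun i => if i = j then (-1 : ℂ) else 1) * Dp * 1 := by
      rw [mul_one, hDm, hDp, Matrix.diagonal_mul_diagonal]
      have : ∀ i, (Function.update μ j (-b) i : ℂ) =
          (if i = j then (-1 : ℂ) else 1) * (Function.update μ j b i : ℂ) := by
        intro i
        rcases eq_or_ne i j with rfl | h
        · simp only [Function.update_self, if_pos rfl]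
          push_cast
          ring
        · simp [Function.update_of_ne h, h]
      exact congrArg Matrix.diagonal (funext this)
    have hEu : Matrix.diagonal (fun i => if i = j then (-1 : ℂ) else 1) ∈
        Matrix.unitaryGroup (Fin n) ℂ := by
      rw [Matrix.mem_unitaryGroup_iff, Matrix.star_eq_conjTranspose, Matrix.diagonal_conjTranspose,
        Matrix.diagonal_mul_diagonal]
      convert Matrix.diagonal_one using 2
      funext i
      rcases eq_or_ne i j with rfl | h
      · simp
      · simp [h]
    have hNm : N Dm = N Dp := by
      rw [hE, hui _ _ hEu _ (one_mem _)]
    calc N (Matrix.diagonal (fun i => (μ i : ℂ)))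
        ≤ N ((s : ℂ) • Dp) + N (((1 - s : ℝ) : ℂ) • Dm) := by rw [hdecomp]; exact hadd _ _
      _ = s * N Dp + (1 - s) * N Dm := by
          rw [hsmul, hsmul, Complex.norm_of_nonneg hs0,
            Complex.norm_of_nonneg (by linarith)]
      _ = N Dp := by rw [hNm]; ring

lemma diag_mono (N : Matrix (Fin n) (Fin n) ℂ → ℝ)
    (hadd : ∀ X Y, N (X + Y) ≤ N X + N Y)
    (hsmul : ∀ (c : ℂ) X, N (c • X) = ‖c‖ * N X)
    (hui : ∀ X, ∀ U ∈ Matrix.unitaryGroup (Fin n) ℂ, ∀ V ∈ Matrix.unitaryGroup (Fin n) ℂ,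
      N (U * X * V) = N X)
    (ν : Fin n → ℝ) (μ : Fin n → ℝ) (h0 : ∀ i, 0 ≤ μ i) (h : ∀ i, μ i ≤ ν i) :
    N (Matrix.diagonal (fun i => (μ i : ℂ))) ≤ N (Matrix.diagonal (fun i => (ν i : ℂ))) := by
  suffices H : ∀ m : ℕ, ∀ μ : Fin n → ℝ, (∀ i, 0 ≤ μ i) → (∀ i, μ i ≤ ν i) →
      (∀ i : Fin n, (m : ℕ) ≤ (i : ℕ) → μ i = ν i) →
      N (Matrix.diagonal (fun i => (μ i : ℂ))) ≤ N (Matrix.diagonal (fun i => (ν i : ℂ))) by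
    exact H n μ h0 h (fun i hi => absurd i.isLt (by omega))
  intro m
  induction m with
  | zero =>
    intro μ h0 h hagree
    have : μ = ν := funext fun i => hagree i (Nat.zero_le _)
    rw [this]
  | succ m ih =>
    intro μ h0 h hagree
    by_cases hm : m < n
    · set j : Fin n := ⟨m, hm⟩ with hj
      have step := diag_step N hadd hsmul hui μ j (ν j) (h0 j) (h j)
      refine step.trans (ih (Function.update μ j (ν j)) ?_ ?_ ?_)
      · intro i
        rcases eq_or_ne i j with rfl | hij
        · simpa using (h0 j).trans (h j)
        · simpa [Function.update_of_ne hij] using h0 i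
      · intro i
        rcases eq_or_ne i j with rfl | hij
        · simp
        · simpa [Function.update_of_ne hij] using h i
      · intro i hi
        rcases eq_or_ne i j with rfl | hij
        · simp
        · rw [Function.update_of_ne hij]
          have hne : (i : ℕ) ≠ m := fun hc => hij (Fin.ext (by simp [hc, hj]))
          exact hagree i (by omega)
    · exact ih μ h0 h (fun i hi => absurd i.isLt (by omega))

lemma dot_self_eq_normSq (v : Fin n → ℂ) :
    star v ⬝ᵥ v = ((∑ i, Complex.normSq (v i) : ℝ) : ℂ) := by
  push_cast
  simp [dotProduct, ← Complex.normSq_eq_conj_mul_self]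

lemma star_mulVec_dot (W : Matrix (Fin n) (Fin n) ℂ) (hW : W ∈ Matrix.unitaryGroup (Fin n) ℂ)
    (x : Fin n → ℂ) :
    star ((star W) *ᵥ x) ⬝ᵥ ((star W) *ᵥ x) = star x ⬝ᵥ x := by
  rw [star_mulVec, ← Matrix.star_eq_conjTranspose, star_star, ← dotProduct_mulVec, mulVec_mulVec,
    Matrix.mem_unitaryGroup_iff.mp hW, one_mulVec]

lemma quad_expand (X : Matrix (Fin n) (Fin n) ℂ) (hX : X.IsHermitian) (x : Fin n → ℂ) :
    star x ⬝ᵥ X *ᵥ x = ((∑ i, hX.eigenvalues i *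
      Complex.normSq ((star (hX.eigenvectorUnitary : Matrix (Fin n) (Fin n) ℂ) *ᵥ x) i) : ℝ) : ℂ) := by
  set V : Matrix (Fin n) (Fin n) ℂ := (hX.eigenvectorUnitary : Matrix (Fin n) (Fin n) ℂ) with hV
  set y := star V *ᵥ x with hy
  have h1 : star x ⬝ᵥ X *ᵥ x = star y ⬝ᵥ (Matrix.diagonal (RCLike.ofReal ∘ hX.eigenvalues)) *ᵥ y := by
    conv_lhs => rw [hX.spectral_theorem, Unitary.conjStarAlgAut_apply]
    rw [hy, star_mulVec, ← Matrix.star_eq_conjTranspose, star_star, ← dotProduct_mulVec,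
      mul_assoc, ← mulVec_mulVec, ← mulVec_mulVec]
  rw [h1]
  push_cast
  simp only [dotProduct, Matrix.mulVec_diagonal, Pi.star_apply, Function.comp_apply]
  congr 1; funext i
  rw [show star (y i) = (starRingEnd ℂ) (y i) from rfl, mul_comm ((starRingEnd ℂ) (y i)),
    mul_assoc, Complex.mul_conj]
  rfl

/-- Weyl's monotonicity principle. -/
lemma weyl (A B : Matrix (Fin n) (Fin n) ℂ) (hA : A.IsHermitian) (hB : B.IsHermitian)
    (hBA : (A - B).PosSemidef) (k : Fin n) :
    hB.eigenvalues (Tuple.sort hB.eigenvalues k) ≤ hA.eigenvalues (Tuple.sort hA.eigenvalues k) := by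
  set lA := hA.eigenvalues with hlA
  set lB := hB.eigenvalues with hlB
  set q := Tuple.sort hA.eigenvalues with hq
  set p := Tuple.sort hB.eigenvalues with hp
  set V : Matrix (Fin n) (Fin n) ℂ := (hA.eigenvectorUnitary : Matrix (Fin n) (Fin n) ℂ) with hV
  set U : Matrix (Fin n) (Fin n) ℂ := (hB.eigenvectorUnitary : Matrix (Fin n) (Fin n) ℂ) with hU
  have hVu : V ∈ Matrix.unitaryGroup (Fin n) ℂ := hA.eigenvectorUnitary.2
  have hUu : U ∈ Matrix.unitaryGroup (Fin n) ℂ := hB.eigenvectorUnitary.2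
  set W : Matrix (Fin n) (Fin n) ℂ := star U * V with hW
  set M : Matrix (Fin n) (Fin n) ℂ := Matrix.of fun i j =>
    if (i : ℕ) < (k : ℕ) then W (p i) (q j)
    else if i = k then 0 else if i = j then 1 else 0 with hM
  have hdet : M.det = 0 := by
    apply Matrix.det_eq_zero_of_row_eq_zero k
    intro j
    simp [hM]
  obtain ⟨c, hc0, hMc⟩ := (Matrix.exists_mulVec_eq_zero_iff).mpr hdet
  have hczero : ∀ j : Fin n, (k : ℕ) < (j : ℕ) → c j = 0 := by
    intro j hj
    have hj1 : ¬ ((j : ℕ) < (k : ℕ)) := by omega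
    have hj2 : j ≠ k := fun hc => by simp [hc] at hj
    have h1 : M *ᵥ c = fun i => ∑ l, M i l * c l := rfl
    have h2 := congrFun hMc j
    rw [h1] at h2
    simp only [hM, Matrix.of_apply, hj1, if_false, hj2, if_false] at h2
    simp only [ite_mul, one_mul, zero_mul] at h2
    rwa [Finset.sum_ite_eq (Finset.univ : Finset (Fin n)) j c, if_pos (Finset.mem_univ j)] at h2
  have hrow : ∀ i : Fin n, (i : ℕ) < (k : ℕ) → ∑ l, W (p i) (q l) * c l = 0 := by
    intro i hi
    have h2 := congrFun hMc i
    have h1 : M *ᵥ c = fun i => ∑ l, M i l * c l := rfl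
    rw [h1] at h2
    simpa only [hM, Matrix.of_apply, hi, if_true, Pi.zero_apply] using h2
  set ct : Fin n → ℂ := fun m => c (q.symm m) with hct
  set x : Fin n → ℂ := V *ᵥ ct with hx
  have hsVV : star V * V = 1 := by
    have := hA.eigenvectorUnitary.2
    exact (Matrix.mem_unitaryGroup_iff').mp this
  have hyA : star V *ᵥ x = ct := by
    rw [hx, mulVec_mulVec, hsVV, one_mulVec]
  set yB : Fin n → ℂ := star U *ᵥ x with hyB
  have hyBW : yB = W *ᵥ ct := by rw [hyB, hx, mulVec_mulVec, hW]
  have hyB0 : ∀ i : Fin n, (i : ℕ) < (k : ℕ) → yB (p i) = 0 := by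
    intro i hi
    rw [hyBW]
    have : W *ᵥ ct = fun m => ∑ l, W m l * ct l := rfl
    rw [this]
    show ∑ l, W (p i) l * ct l = 0
    have hre : ∑ l, W (p i) l * ct l = ∑ j, W (p i) (q j) * c j := by
      rw [← Equiv.sum_comp q (fun l => W (p i) l * ct l)]
      refine Finset.sum_congr rfl fun j _ => ?_
      simp [hct]
    rw [hre]
    exact hrow i hi
  set S : ℝ := ∑ j, Complex.normSq (c j) with hS
  have hSpos : 0 < S := by
    obtain ⟨j, hj⟩ := Function.ne_iff.mp hc0
    refine Finset.sum_pos' (fun i _ => Complex.normSq_nonneg _) ⟨j, Finset.mem_univ j, ?_⟩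
    exact Complex.normSq_pos.mpr hj
  have hA_quad : star x ⬝ᵥ A *ᵥ x = ((∑ m, lA m * Complex.normSq (ct m) : ℝ) : ℂ) := by
    rw [quad_expand A hA x]
    congr 1
    refine Finset.sum_congr rfl fun m _ => ?_
    rw [show (star (hA.eigenvectorUnitary : Matrix (Fin n) (Fin n) ℂ) *ᵥ x) = ct from hyA]
  have hB_quad : star x ⬝ᵥ B *ᵥ x = ((∑ m, lB m * Complex.normSq (yB m) : ℝ) : ℂ) := by
    rw [quad_expand B hB x]
  have hnormB : ∑ m, Complex.normSq (yB m) = S := by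
    have h1 : star yB ⬝ᵥ yB = star x ⬝ᵥ x := star_mulVec_dot U hUu x
    have h2 : star ct ⬝ᵥ ct = star x ⬝ᵥ x := by
      rw [← hyA]; exact star_mulVec_dot V hVu x
    have h3 : star yB ⬝ᵥ yB = star ct ⬝ᵥ ct := h1.trans h2.symm
    rw [dot_self_eq_normSq, dot_self_eq_normSq] at h3
    have h4 := Complex.ofReal_inj.mp h3
    rw [h4, hS, ← Equiv.sum_comp q (fun m => Complex.normSq (ct m))]
    refine Finset.sum_congr rfl fun j _ => ?_
    simp [hct]
  have hAbound : ∑ m, lA m * Complex.normSq (ct m) ≤ lA (q k) * S := by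
    rw [← Equiv.sum_comp q (fun m => lA m * Complex.normSq (ct m)), hS, Finset.mul_sum]
    refine Finset.sum_le_sum fun j _ => ?_
    simp only [hct, Equiv.symm_apply_apply]
    rcases le_or_gt (j : ℕ) (k : ℕ) with hjk | hjk
    · exact mul_le_mul_of_nonneg_right (Tuple.monotone_sort hA.eigenvalues (by exact hjk))
        (Complex.normSq_nonneg _)
    · rw [hczero j hjk]
      simp
  have hBbound : lB (p k) * S ≤ ∑ m, lB m * Complex.normSq (yB m) := by
    rw [← hnormB, ← Equiv.sum_comp p (fun m => lB m * Complex.normSq (yB m)),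
      ← Equiv.sum_comp p (fun m => Complex.normSq (yB m)), Finset.mul_sum]
    refine Finset.sum_le_sum fun i _ => ?_
    rcases le_or_gt (k : ℕ) (i : ℕ) with hik | hik
    · exact mul_le_mul_of_nonneg_right (Tuple.monotone_sort hB.eigenvalues (by exact hik))
        (Complex.normSq_nonneg _)
    · rw [hyB0 i hik]
      simp
  have hcmp : ∑ m, lB m * Complex.normSq (yB m) ≤ ∑ m, lA m * Complex.normSq (ct m) := by
    have h0 := hBA.dotProduct_mulVec_nonneg x
    rw [Matrix.sub_mulVec, dotProduct_sub, hA_quad, hB_quad, ← Complex.ofReal_sub] at h0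
    have h1 := Complex.zero_le_real.mp h0
    linarith
  have := (hBbound.trans hcmp).trans hAbound
  exact le_of_mul_le_mul_right (by linarith) hSpos

end Aux

theorem norm_matFun_mono {n : ℕ} (A B : Matrix (Fin n) (Fin n) ℂ)
    (hA : A.PosSemidef) (hB : B.PosSemidef) (hBA : (A - B).PosSemidef)
    (f : ℝ → ℝ) (hf : ConcaveOn ℝ (Set.Ici 0) f) (hf0 : ∀ x : ℝ, 0 ≤ x → 0 ≤ f x)
    (N : Matrix (Fin n) (Fin n) ℂ → ℝ)
    (hadd : ∀ X Y, N (X + Y) ≤ N X + N Y)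
    (hsmul : ∀ (c : ℂ) X, N (c • X) = ‖c‖ * N X)
    (hui : ∀ X, ∀ U ∈ Matrix.unitaryGroup (Fin n) ℂ, ∀ V ∈ Matrix.unitaryGroup (Fin n) ℂ,
      N (U * X * V) = N X) :
    N (matFun f B) ≤ N (matFun f A) := by
  have hAH := hA.1
  have hBH := hB.1
  set p := Tuple.sort hBH.eigenvalues with hp
  set q := Tuple.sort hAH.eigenvalues with hq
  -- reduce to diagonal matrices
  have hmB : N (matFun f B) = N (Matrix.diagonal (fun i => (f (hBH.eigenvalues i) : ℂ))) := by
    rw [matFun, dif_pos hBH]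
    exact hui _ _ hBH.eigenvectorUnitary.2 _ (Unitary.star_mem hBH.eigenvectorUnitary.2)
  have hmA : N (matFun f A) = N (Matrix.diagonal (fun i => (f (hAH.eigenvalues i) : ℂ))) := by
    rw [matFun, dif_pos hAH]
    exact hui _ _ hAH.eigenvectorUnitary.2 _ (Unitary.star_mem hAH.eigenvectorUnitary.2)
  rw [hmA, hmB]
  -- reorder via the sorting permutations
  rw [← perm_diag_eq N hui (fun i => (f (hBH.eigenvalues i) : ℂ)) p,
    ← perm_diag_eq N hui (fun i => (f (hAH.eigenvalues i) : ℂ)) q]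
  have hdB : ((fun i => (f (hBH.eigenvalues i) : ℂ)) ∘ p) =
      fun i => ((f (hBH.eigenvalues (p i)) : ℝ) : ℂ) := rfl
  have hdA : ((fun i => (f (hAH.eigenvalues i) : ℂ)) ∘ q) =
      fun i => ((f (hAH.eigenvalues (q i)) : ℝ) : ℂ) := rfl
  rw [hdB, hdA]
  refine diag_mono N hadd hsmul hui _ _ (fun i => hf0 _ (hB.eigenvalues_nonneg _)) fun i => ?_
  exact concave_nonneg_mono f hf hf0 (hB.eigenvalues_nonneg _) (weyl A B hAH hBH hBA i)
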